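/- Suppose: α* is a local minimizer of (D_{0/1}); (u*, b*) satisfies (KKT-T*); w* := Σ_{i=1}^m α*_i y_i x_i, z* := (w*, b*), I₀* := {i : u_i(z*) ≤ 0}; c* ∈ ℝ^m satisfies c*_i > α*_i for i ∈ I₀* and c*_i = α*_i for i ∉ I₀*; and both sets {i : u_i(z*) ≤ 0, y_i = 1} and {i : u_i(z*) ≤ 0, y_i = −1} are nonempty. Then z* is the unique global minimizer of the hinge-loss SVM objective z ↦ F₁(z, c*). -/

import Mathlib

open scoped RealInnerProductSpace BigOperators

noncomputable section

/-- The 0/1 loss: `1` if `t > 0`, `0` otherwise. -/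
def l01 (t : ℝ) : ℝ := if 0 < t then 1 else 0

/-- The ramp loss with parameter `γ`. -/
def ramp (γ t : ℝ) : ℝ := if γ < t then 1 else if 0 ≤ t then t else 0

variable {n m : ℕ}

/-- The margin residual `u_i(z) = 1 - y_i (⟨w, x_i⟩ + b)` for `z = (w, b)`. -/
def uu (x : Fin m → EuclideanSpace ℝ (Fin n)) (y : Fin m → ℝ)
    (z : EuclideanSpace ℝ (Fin n) × ℝ) (i : Fin m) : ℝ :=
  1 - y i * (⟪z.1, x i⟫ + z.2)

/-- The 0/1-loss SVM objective `F_{0/1}`. -/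
def F01 (x : Fin m → EuclideanSpace ℝ (Fin n)) (y : Fin m → ℝ) (lam : ℝ)
    (z : EuclideanSpace ℝ (Fin n) × ℝ) : ℝ :=
  (1 / 2) * ‖z.1‖ ^ 2 + lam * ∑ i, l01 (uu x y z i)

/-- The hinge-loss SVM objective `F₁(z, c)`. -/
def F1 (x : Fin m → EuclideanSpace ℝ (Fin n)) (y : Fin m → ℝ)
    (c : EuclideanSpace ℝ (Fin m)) (z : EuclideanSpace ℝ (Fin n) × ℝ) : ℝ :=
  (1 / 2) * ‖z.1‖ ^ 2 + ∑ i, c i * max (uu x y z i) 0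

/-- The dual quadratic objective `G(α) = (1/2)⟨α, Qα⟩ - Σ αᵢ`,
where `Q_{ij} = y_i y_j ⟨x_i, x_j⟩`. -/
def Gfun (x : Fin m → EuclideanSpace ℝ (Fin n)) (y : Fin m → ℝ)
    (α : EuclideanSpace ℝ (Fin m)) : ℝ :=
  (1 / 2) * ∑ i, ∑ j, α i * (y i * y j * ⟪x i, x j⟫) * α j - ∑ i, α i

/-- The ℓ₀ "norm": the number of nonzero entries. -/
def norm0 (α : EuclideanSpace ℝ (Fin m)) : ℝ := (({i | α i ≠ 0} : Set (Fin m)).ncard : ℝ)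

/-- Feasibility for the dual problem `(D_{0/1})`. -/
def DFeas (y : Fin m → ℝ) (α : EuclideanSpace ℝ (Fin m)) : Prop :=
  (∀ i, 0 ≤ α i) ∧ ∑ i, y i * α i = 0

/-- `α*` is a local minimizer of the dual problem `(D_{0/1})` with parameter `μ`. -/
def DLocalMin (x : Fin m → EuclideanSpace ℝ (Fin n)) (y : Fin m → ℝ) (μ : ℝ)
    (αs : EuclideanSpace ℝ (Fin m)) : Prop :=
  DFeas y αs ∧ ∃ ε > 0, ∀ α : EuclideanSpace ℝ (Fin m), DFeas y α → dist α αs ≤ ε →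
    Gfun x y αs + μ * norm0 αs ≤ Gfun x y α + μ * norm0 α

/-- The KKT system (KKT-T*) for `(D_I)` with `I = T* = {i : α*_i ≠ 0}`:
`Qα* - 1 + u* + b* y = 0`; `α*_i ≥ 0`, `u*_i ≤ 0`, `α*_i u*_i = 0` on `T*`;
(`α*_i = 0` off `T*` holds by definition of `T*`); and `⟨y, α*⟩ = 0`. -/
def KKTT (x : Fin m → EuclideanSpace ℝ (Fin n)) (y : Fin m → ℝ)
    (αs us : EuclideanSpace ℝ (Fin m)) (bs : ℝ) : Prop :=
  (∀ i, (∑ j, (y i * y j * ⟪x i, x j⟫) * αs j) - 1 + us i + bs * y i = 0) ∧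
  (∀ i, αs i ≠ 0 → 0 ≤ αs i ∧ us i ≤ 0 ∧ αs i * us i = 0) ∧
  ∑ i, y i * αs i = 0

/-- The ramp-loss SVM objective of `(P_r)`. -/
def PrObj (x : Fin m → EuclideanSpace ℝ (Fin n)) (y : Fin m → ℝ) (ρ γ : ℝ)
    (z : EuclideanSpace ℝ (Fin n) × ℝ) : ℝ :=
  (1 / 2) * ‖z.1‖ ^ 2 + ρ * ∑ i, ramp γ (uu x y z i)

/-- The penalty objective of problem (pen). -/
def Pen (x : Fin m → EuclideanSpace ℝ (Fin n)) (y : Fin m → ℝ) (ρ γ : ℝ)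
    (p : (EuclideanSpace ℝ (Fin n) × ℝ) × EuclideanSpace ℝ (Fin m)) : ℝ :=
  (1 / 2) * ‖p.1.1‖ ^ 2 + ρ * ∑ i, |uu x y p.1 i - p.2 i| + ρ * γ * ∑ i, l01 (p.2 i)

/-- The smooth part `Φ(z, v)` of the penalty objective. -/
def Phi (x : Fin m → EuclideanSpace ℝ (Fin n)) (y : Fin m → ℝ) (ρ : ℝ)
    (p : (EuclideanSpace ℝ (Fin n) × ℝ) × EuclideanSpace ℝ (Fin m)) : ℝ :=
  (1 / 2) * ‖p.1.1‖ ^ 2 + ρ * ∑ i, |uu x y p.1 i - p.2 i|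

/-- The KKT system (KKT-PI) for `(P_{0/1})` at `z*`. -/
def KKTPI (x : Fin m → EuclideanSpace ℝ (Fin n)) (y : Fin m → ℝ)
    (zs : EuclideanSpace ℝ (Fin n) × ℝ) (αs : EuclideanSpace ℝ (Fin m)) : Prop :=
  zs.1 = ∑ i, (αs i * y i) • x i ∧
  (∀ i, uu x y zs i ≤ 0 → 0 ≤ αs i ∧ αs i * uu x y zs i = 0) ∧
  (∀ i, ¬ uu x y zs i ≤ 0 → αs i = 0) ∧
  ∑ i, y i * αs i = 0


/-- under the strict weight condition and Assumption 1,
`z* = (w*, b*)` is the unique global minimizer of `z ↦ F₁(z, c*)`. -/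
theorem stmt6 {n m : ℕ} (hn : 0 < n) (hm : 0 < m)
    (x : Fin m → EuclideanSpace ℝ (Fin n)) (y : Fin m → ℝ)
    (hy : ∀ i, y i = 1 ∨ y i = -1)
    (μ : ℝ) (hμ : 0 < μ)
    (αs us : EuclideanSpace ℝ (Fin m)) (bs : ℝ)
    (hloc : DLocalMin x y μ αs)
    (hkkt : KKTT x y αs us bs)
    (ws : EuclideanSpace ℝ (Fin n)) (hws : ws = ∑ i, (αs i * y i) • x i)
    (cs : EuclideanSpace ℝ (Fin m))
    (hcs : ∀ i, (uu x y (ws, bs) i ≤ 0 → αs i < cs i) ∧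
      (¬ uu x y (ws, bs) i ≤ 0 → cs i = αs i))
    (hS : (∃ i, uu x y (ws, bs) i ≤ 0 ∧ y i = 1) ∧
      (∃ i, uu x y (ws, bs) i ≤ 0 ∧ y i = -1)) :
    (∀ z : EuclideanSpace ℝ (Fin n) × ℝ, F1 x y cs (ws, bs) ≤ F1 x y cs z) ∧
    (∀ z : EuclideanSpace ℝ (Fin n) × ℝ, F1 x y cs z ≤ F1 x y cs (ws, bs) →
      z = (ws, bs)) := by
  classical
  -- basic facts
  have hα0 : ∀ i, 0 ≤ αs i := hloc.1.1
  have hsum0 : ∑ i, y i * αs i = 0 := hloc.1.2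
  have hy2 : ∀ i, y i * y i = 1 := by
    intro i; rcases hy i with h | h <;> rw [h] <;> norm_num
  -- us = uu(z*)
  have hU : ∀ i, us i = uu x y (ws, bs) i := by
    intro i
    have h := hkkt.1 i
    have hw : ⟪ws, x i⟫ = ∑ j, (αs j * y j) * ⟪x j, x i⟫ := by
      rw [hws, sum_inner]
      exact Finset.sum_congr rfl fun j _ => real_inner_smul_left _ _ _
    have hQ : (∑ j, (y i * y j * ⟪x i, x j⟫) * αs j) = y i * ⟪ws, x i⟫ := by
      rw [hw, Finset.mul_sum]
      refine Finset.sum_congr rfl fun j _ => ?_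
      rw [real_inner_comm (x j) (x i)]; ring
    rw [hQ] at h
    simp only [uu]
    linarith
  have hcomp : ∀ i, αs i ≠ 0 → uu x y (ws, bs) i = 0 := by
    intro i hi
    have h := (hkkt.2.1 i hi).2.2
    rw [hU i] at h
    exact (mul_eq_zero.mp h).resolve_left hi
  have hαc : ∀ i, αs i ≤ cs i := by
    intro i
    by_cases h : uu x y (ws, bs) i ≤ 0
    · exact ((hcs i).1 h).le
    · exact ((hcs i).2 h).ge
  -- key per-index equality at z*
  have hkey0 : ∀ i, cs i * max (uu x y (ws, bs) i) 0 = αs i * uu x y (ws, bs) i := by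
    intro i
    by_cases h : uu x y (ws, bs) i ≤ 0
    · rw [max_eq_right h]
      by_cases hα : αs i = 0
      · rw [hα]; ring
      · rw [hcomp i hα]; ring
    · push_neg at h
      rw [max_eq_left h.le, (hcs i).2 (not_le.mpr h)]
  -- key per-index inequality everywhere
  have hkeyle : ∀ (z : EuclideanSpace ℝ (Fin n) × ℝ) i,
      αs i * uu x y z i ≤ cs i * max (uu x y z i) 0 := by
    intro z i
    calc αs i * uu x y z i ≤ αs i * max (uu x y z i) 0 :=
          mul_le_mul_of_nonneg_left (le_max_left _ _) (hα0 i)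
      _ ≤ cs i * max (uu x y z i) 0 :=
          mul_le_mul_of_nonneg_right (hαc i) (le_max_right _ _)
  -- sum identity
  have hsumαu : ∀ z : EuclideanSpace ℝ (Fin n) × ℝ,
      ∑ i, αs i * uu x y z i = (∑ i, αs i) - ⟪z.1, ws⟫ := by
    intro z
    have hw : ⟪z.1, ws⟫ = ∑ i, αs i * y i * ⟪z.1, x i⟫ := by
      rw [hws, inner_sum]
      exact Finset.sum_congr rfl fun j _ => real_inner_smul_right _ _ _
    have h1 : ∀ i ∈ Finset.univ, αs i * uu x y z i
        = αs i - αs i * y i * ⟪z.1, x i⟫ - z.2 * (y i * αs i) := by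
      intro i _; simp only [uu]; ring
    rw [Finset.sum_congr rfl h1, Finset.sum_sub_distrib, Finset.sum_sub_distrib,
      ← Finset.mul_sum, hsum0, mul_zero, sub_zero, hw]
  -- value at z*
  have hF1s : F1 x y cs (ws, bs) = (∑ i, αs i) - (1/2) * ‖ws‖ ^ 2 := by
    have h1 : ∑ i, cs i * max (uu x y (ws, bs) i) 0 = ∑ i, αs i * uu x y (ws, bs) i :=
      Finset.sum_congr rfl fun i _ => hkey0 i
    have h2 := hsumαu (ws, bs)
    simp only [F1]
    rw [h1, h2]
    have : ⟪ws, ws⟫ = ‖ws‖ ^ 2 := real_inner_self_eq_norm_sq ws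
    simp only at this ⊢
    rw [this]; ring
  -- main inequality with quadratic growth
  have hmain : ∀ z : EuclideanSpace ℝ (Fin n) × ℝ,
      F1 x y cs (ws, bs) + (1/2) * ‖z.1 - ws‖ ^ 2 ≤ F1 x y cs z := by
    intro z
    have h1 : ∑ i, αs i * uu x y z i ≤ ∑ i, cs i * max (uu x y z i) 0 :=
      Finset.sum_le_sum fun i _ => hkeyle z i
    have h2 := hsumαu z
    have h3 : ‖z.1 - ws‖ ^ 2 = ‖z.1‖ ^ 2 - 2 * ⟪z.1, ws⟫ + ‖ws‖ ^ 2 :=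
      norm_sub_sq_real z.1 ws
    rw [hF1s]
    simp only [F1]
    linarith [h1, h2, h3]
  refine ⟨fun z => le_trans (le_add_of_nonneg_right (by positivity)) (hmain z), ?_⟩
  -- uniqueness
  intro z hz
  -- exists k with αs k ≠ 0
  have hEx : ∃ k, αs k ≠ 0 := by
    by_contra h
    push_neg at h
    have hws0 : ws = 0 := by
      rw [hws]
      exact Finset.sum_eq_zero fun i _ => by rw [h i, zero_mul, zero_smul]
    obtain ⟨⟨ip, hup, hyp⟩, ⟨iq, huq, hyq⟩⟩ := hS
    rw [hws0] at hup huq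
    simp only [uu, inner_zero_left, zero_add, hyp] at hup
    simp only [uu, inner_zero_left, zero_add, hyq] at huq
    linarith
  obtain ⟨k, hk⟩ := hEx
  have hwz : z.1 = ws := by
    have h := hmain z
    have hnn : (0:ℝ) ≤ (1/2) * ‖z.1 - ws‖ ^ 2 := by positivity
    have : ‖z.1 - ws‖ ^ 2 = 0 := by nlinarith
    have : ‖z.1 - ws‖ = 0 := by nlinarith [norm_nonneg (z.1 - ws)]
    exact sub_eq_zero.mp (norm_eq_zero.mp this)
  -- all slack terms vanish
  have hterm : ∀ i, cs i * max (uu x y z i) 0 = αs i * uu x y z i := by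
    have hsle : ∑ i, (cs i * max (uu x y z i) 0 - αs i * uu x y z i) = 0 := by
      have h2 := hsumαu z
      rw [hwz] at h2
      have h3 : ⟪ws, ws⟫ = ‖ws‖ ^ 2 := real_inner_self_eq_norm_sq ws
      have h4 : F1 x y cs z = (1/2) * ‖ws‖ ^ 2 + ∑ i, cs i * max (uu x y z i) 0 := by
        simp only [F1, hwz]
      have h5 : ∑ i, (cs i * max (uu x y z i) 0 - αs i * uu x y z i)
          = (∑ i, cs i * max (uu x y z i) 0) - ∑ i, αs i * uu x y z i :=
        Finset.sum_sub_distrib _ _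
      have h6 : (0:ℝ) ≤ ∑ i, (cs i * max (uu x y z i) 0 - αs i * uu x y z i) := by
        refine Finset.sum_nonneg fun i _ => ?_
        linarith [hkeyle z i]
      rw [hF1s] at hz
      linarith
    intro i
    have := (Finset.sum_eq_zero_iff_of_nonneg
      (fun i _ => by linarith [hkeyle z i])).mp hsle i (Finset.mem_univ i)
    linarith
  -- conclude z.2 = bs
  have hbz : z.2 = bs := by
    by_contra hb
    have huk : uu x y (ws, bs) k = 0 := hcomp k hk
    have hαk : 0 < αs k := (hα0 k).lt_of_ne (Ne.symm hk)
    have hck : αs k < cs k := (hcs k).1 huk.le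
    have huz : uu x y z k = y k * (bs - z.2) := by
      have h1 : uu x y (ws, bs) k = 1 - y k * (⟪ws, x k⟫ + bs) := rfl
      simp only [uu, hwz]
      rw [h1] at huk
      ring_nf
      ring_nf at huk
      linarith
    have hδ : y k * (bs - z.2) ≠ 0 := by
      rcases hy k with h | h <;> rw [h] <;>
        simp only [one_mul, neg_mul, neg_eq_zero, ne_eq, sub_eq_zero] <;>
        exact fun hc => hb hc.symm
    have ht := hterm k
    rw [huz] at ht
    rcases lt_or_gt_of_ne hδ with h | h
    · rw [max_eq_right h.le] at ht
      nlinarith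
    · rw [max_eq_left h.le] at ht
      nlinarith
  exact Prod.ext hwz hbz

end
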